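/- (Abstract best-approximation / Céa-type lemma.) Let 0 < c ≤ C and for each i ∈ {1,…,d} let φ_i be an N-function that is C² on (0,∞), satisfies the Δ₂-condition with constant D together with its complementary function φ_i*, is uniformly convex with constants c, C, and let (φ_i, A_i) satisfy the orthotropic growth conditions with constants c, C. Define ψ_i(t) = ∫₀ᵗ √(s φ_i'(s)) ds, V_i(s) = ψ_i'(|s|) s/|s| (V_i(0) = 0), and the coordinatewise maps A, V : ℝ^d → ℝ^d. Let Ω ⊂ ℝ^d be measurable with finite measure, and let G, G_h, G_v : Ω → ℝ^d be measurable vector fields such that ∫_Ω |V(G) − V(G_h)|² dx and ∫_Ω |V(G) − V(G_v)|² dx are finite and the Galerkin orthogonality relation ∫_Ω (A(G(x)) − A(G_h(x))) · (G_h(x) − G_v(x)) dx = 0 holds (all integrals appearing being finite). Then ∫_Ω |V(G) − V(G_h)|² dx ≤ C'' ∫_Ω |V(G) − V(G_v)|² dx, with a constant C'' depending only on c, C, D (not on Ω, G, G_h, G_v). -/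

import Mathlib

open MeasureTheory

/-- An N-function `Φ` with derivative `Φ'`: differentiable on `[0,∞)` with
`Φ(0) = 0`, `Φ(t) = ∫₀ᵗ Φ'(s) ds`, `Φ'` nondecreasing, right-continuous,
`Φ'(0) = 0` and `Φ'(t) > 0` for `t > 0`. -/
structure IsNFunction (Φ Φ' : ℝ → ℝ) : Prop where
  map_zero : Φ 0 = 0
  eq_integral : ∀ t : ℝ, 0 ≤ t → Φ t = ∫ s in (0:ℝ)..t, Φ' s
  deriv_zero : Φ' 0 = 0
  deriv_pos : ∀ t : ℝ, 0 < t → 0 < Φ' t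
  deriv_mono : MonotoneOn Φ' (Set.Ici 0)
  deriv_rightCont : ∀ t : ℝ, 0 ≤ t → ContinuousWithinAt Φ' (Set.Ici t) t

/-- The Δ₂-condition with constant `D`. -/
def Delta2 (Φ : ℝ → ℝ) (D : ℝ) : Prop := ∀ t : ℝ, 0 < t → Φ (2 * t) ≤ D * Φ t

/-- Uniform convexity with constants `c ≤ C`: `c Φ'(t) ≤ t Φ''(t) ≤ C Φ'(t)` for `t > 0`. -/
def UniformlyConvex (Φ' Φ'' : ℝ → ℝ) (c C : ℝ) : Prop :=
  ∀ t : ℝ, 0 < t → c * Φ' t ≤ t * Φ'' t ∧ t * Φ'' t ≤ C * Φ' t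

/-- The orthotropic growth conditions for the pair `(φ, A)` with constants `c ≤ C`
(all terms vanish when `ξ = η`). -/
def OrthotropicGrowth (Φ'' A : ℝ → ℝ) (c C : ℝ) : Prop :=
  ∀ ξ η : ℝ, c * (Φ'' (|ξ| + |η|) * |ξ - η| ^ 2) ≤ (A ξ - A η) * (ξ - η) ∧
    |A ξ - A η| ≤ C * (Φ'' (|ξ| + |η|) * |ξ - η|)

/-- The (generalized) inverse `(Φ')⁻¹(t) = sup {s ≥ 0 : Φ'(s) ≤ t}`. -/
noncomputable def invDeriv (Φ' : ℝ → ℝ) (t : ℝ) : ℝ := sSup {s : ℝ | 0 ≤ s ∧ Φ' s ≤ t}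

/-- The complementary N-function `Φ*(t) = ∫₀ᵗ (Φ')⁻¹(s) ds`. -/
noncomputable def complementary (Φ' : ℝ → ℝ) (t : ℝ) : ℝ := ∫ s in (0:ℝ)..t, invDeriv Φ' s

/-- `ψ'(t) = √(t Φ'(t))`. -/
noncomputable def psiDeriv (Φ' : ℝ → ℝ) (t : ℝ) : ℝ := Real.sqrt (t * Φ' t)

/-- `ψ(t) = ∫₀ᵗ √(s Φ'(s)) ds`. -/
noncomputable def psiOf (Φ' : ℝ → ℝ) (t : ℝ) : ℝ := ∫ s in (0:ℝ)..t, psiDeriv Φ' s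

/-- `V(s) = ψ'(|s|) s/|s|` for `s ≠ 0`, `V(0) = 0`. -/
noncomputable def Vof (Φ' : ℝ → ℝ) (s : ℝ) : ℝ :=
  if s = 0 then 0 else psiDeriv Φ' |s| * s / |s|

set_option maxHeartbeats 1000000

namespace Statement9Aux

structure Nice (c C : ℝ) (φ' φ'' : ℝ → ℝ) : Prop where
  hc : 0 < c
  hcC : c ≤ C
  mono : MonotoneOn φ' (Set.Ici 0)
  zero : φ' 0 = 0
  pos : ∀ t : ℝ, 0 < t → 0 < φ' t
  deriv : ∀ t : ℝ, 0 < t → HasDerivAt φ' (φ'' t) t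
  low : ∀ t : ℝ, 0 < t → c * φ' t ≤ t * φ'' t
  up : ∀ t : ℝ, 0 < t → t * φ'' t ≤ C * φ' t

variable {c C : ℝ} {φ' φ'' : ℝ → ℝ}

lemma Nice.hC (h : Nice c C φ' φ'') : 0 < C := lt_of_lt_of_le h.hc h.hcC

lemma Nice.nonneg (h : Nice c C φ' φ'') {t : ℝ} (ht : 0 ≤ t) : 0 ≤ φ' t := by
  rcases ht.eq_or_lt with h' | h'
  · rw [← h', h.zero]
  · exact (h.pos t h').le

lemma Nice.ddpos (h : Nice c C φ' φ'') {t : ℝ} (ht : 0 < t) : 0 < φ'' t := by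
  have h1 := h.low t ht
  have h2 := h.pos t ht
  nlinarith [h.hc]

lemma Nice.pow_bound (h : Nice c C φ' φ'') {t s : ℝ} (ht : 0 < t) (hts : t ≤ s) :
    φ' s ≤ (s / t) ^ C * φ' t := by
  have hs : 0 < s := lt_of_lt_of_le ht hts
  have hC := h.hC
  -- g x = φ' x * x ^ (-C) is antitone on Icc t s
  have hanti : AntitoneOn (fun x : ℝ => φ' x * x ^ (-C)) (Set.Icc t s) := by
    apply antitoneOn_of_deriv_nonpos (convex_Icc t s)
    · intro x hx
      have hx0 : 0 < x := lt_of_lt_of_le ht hx.1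
      exact (((h.deriv x hx0).continuousAt).mul
        ((Real.continuousAt_rpow_const x (-C) (Or.inl hx0.ne')))).continuousWithinAt
    · intro x hx
      rw [interior_Icc] at hx
      have hx0 : 0 < x := lt_of_lt_of_le ht hx.1.le
      exact (((h.deriv x hx0).mul
        (Real.hasDerivAt_rpow_const (Or.inl hx0.ne'))).differentiableAt).differentiableWithinAt
    · intro x hx
      rw [interior_Icc] at hx
      have hx0 : 0 < x := lt_of_lt_of_le ht hx.1.le
      have hder : HasDerivAt (fun x : ℝ => φ' x * x ^ (-C))
          (φ'' x * x ^ (-C) + φ' x * (-C * x ^ (-C - 1))) x :=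
        (h.deriv x hx0).mul (Real.hasDerivAt_rpow_const (Or.inl hx0.ne'))
      rw [hder.deriv]
      have hup := h.up x hx0
      have hxc : (0:ℝ) < x ^ (-C - 1) := Real.rpow_pos_of_pos hx0 _
      have hxe : x * x ^ (-C - 1) = x ^ (-C) := by
        rw [mul_comm, ← Real.rpow_add_one hx0.ne']
        norm_num
      rw [← hxe]
      have : φ'' x * (x * x ^ (-C - 1)) + φ' x * (-C * x ^ (-C - 1))
          = (x * φ'' x - C * φ' x) * x ^ (-C - 1) := by ring
      rw [this]
      exact mul_nonpos_of_nonpos_of_nonneg (by linarith) hxc.le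
  have hgs := hanti (Set.mem_Icc.mpr ⟨le_refl t, hts⟩) (Set.mem_Icc.mpr ⟨hts, le_refl s⟩) hts
  -- φ' s * s^(-C) ≤ φ' t * t^(-C)
  have hsC : (0:ℝ) < s ^ C := Real.rpow_pos_of_pos hs _
  have htC : (0:ℝ) < t ^ C := Real.rpow_pos_of_pos ht _
  have hsinv : s ^ (-C) * s ^ C = 1 := by
    rw [← Real.rpow_add hs]; simp
  have htinv : t ^ (-C) * t ^ C = 1 := by
    rw [← Real.rpow_add ht]; simp
  have hdiv : (s / t) ^ C = s ^ C / t ^ C := Real.div_rpow hs.le ht.le C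
  have hmul := mul_le_mul_of_nonneg_right hgs hsC.le
  -- φ' s * s^(-C) * s^C ≤ φ' t * t^(-C) * s^C
  have hL : φ' s * s ^ (-C) * s ^ C = φ' s := by
    rw [mul_assoc, hsinv, mul_one]
  rw [hL] at hmul
  calc φ' s ≤ φ' t * t ^ (-C) * s ^ C := hmul
    _ = (s ^ C / t ^ C) * φ' t := by
        rw [Real.rpow_neg ht.le]
        field_simp
    _ = (s / t) ^ C * φ' t := by rw [hdiv]

lemma Nice.ratio (h : Nice c C φ' φ'') {t s M : ℝ} (hM : 1 ≤ M) (ht : 0 < t) (hs : 0 < s)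
    (hsM : s ≤ M * t) : φ' s ≤ M ^ C * φ' t := by
  have hC := h.hC
  have h1M : (1:ℝ) ≤ M ^ C := Real.one_le_rpow hM hC.le
  rcases le_or_gt s t with hst | hst
  · have := h.mono (Set.mem_Ici.mpr hs.le) (Set.mem_Ici.mpr ht.le) hst
    nlinarith [h.nonneg ht.le]
  · have hb := h.pow_bound ht hst.le
    have hd : s / t ≤ M := (div_le_iff₀ ht).mpr (by linarith)
    have : (s / t) ^ C ≤ M ^ C := Real.rpow_le_rpow (by positivity) hd hC.le
    nlinarith [h.nonneg ht.le]

lemma Nice.cmp (h : Nice c C φ' φ'') {s t M : ℝ} (hM : 1 ≤ M) (hs : 0 < s) (ht : 0 < t)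
    (h1 : s ≤ M * t) (h2 : t ≤ M * s) : c * φ'' s ≤ C * M ^ (C + 1) * φ'' t := by
  have hC := h.hC
  have hMC : (0:ℝ) < M ^ C := Real.rpow_pos_of_pos (by linarith) _
  have a1 : s * φ'' s ≤ C * φ' s := h.up s hs
  have a2 : φ' s ≤ M ^ C * φ' t := h.ratio hM ht hs h1
  have a3 : c * φ' t ≤ t * φ'' t := h.low t ht
  have hdd : 0 ≤ φ'' t := (h.ddpos ht).le
  -- c * (s * φ'' s) ≤ C * M^C * (t * φ'' t)
  have key : c * (s * φ'' s) ≤ C * M ^ C * (t * φ'' t) := by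
    nlinarith [mul_le_mul_of_nonneg_left a1 h.hc.le, mul_le_mul_of_nonneg_left a2 (mul_nonneg h.hc.le hC.le), mul_le_mul_of_nonneg_left a3 (mul_nonneg hC.le hMC.le)]
  have key2 : c * (s * φ'' s) ≤ C * M ^ C * (M * (s * φ'' t)) := by
    have : t * φ'' t ≤ M * (s * φ'' t) := by nlinarith
    nlinarith [this, mul_le_mul_of_nonneg_left this (mul_nonneg hC.le hMC.le)]
  have hMe : M ^ (C + 1) = M ^ C * M := Real.rpow_add_one (by linarith : (0:ℝ) < M).ne' C
  have : s * (c * φ'' s) ≤ s * (C * M ^ (C + 1) * φ'' t) := by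
    rw [hMe]; nlinarith [key2]
  exact le_of_mul_le_mul_left this hs

lemma Nice.cmp' (h : Nice c C φ' φ'') {s t M : ℝ} (hM : 1 ≤ M) (hs : 0 < s) (ht : 0 < t)
    (h1 : s ≤ M * t) (h2 : t ≤ M * s) : φ'' s ≤ C / c * M ^ (C + 1) * φ'' t := by
  have hcc := h.hc
  have key := h.cmp hM hs ht h1 h2
  rw [div_mul_eq_mul_div, div_mul_eq_mul_div, le_div_iff₀ hcc]
  nlinarith [key]


noncomputable def K0i (C : ℝ) : ℝ := C * (2:ℝ) ^ (C + 2)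
noncomputable def K1c (c C : ℝ) : ℝ := ((2 + C * (2:ℝ) ^ C) ^ 2 * C * (2:ℝ) ^ (C + 1) + 4 * c) / (c * c)
noncomputable def kap (c C : ℝ) : ℝ := C / c * (2:ℝ) ^ (C + 1)

lemma K0i_pos {C : ℝ} (hC : 0 < C) : 0 < K0i C := by unfold K0i; positivity

lemma K1c_pos {c C : ℝ} (hc : 0 < c) (hC : 0 < C) : 0 < K1c c C := by
  unfold K1c; positivity

lemma kap_pos {c C : ℝ} (hc : 0 < c) (hC : 0 < C) : 0 < kap c C := by
  unfold kap; positivity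

lemma rC_lemma {C : ℝ} (hC : 0 < C) {r : ℝ} (hr : 1 ≤ r) : r ^ C - 1 ≤ C * r ^ C * (r - 1) := by
  have hr0 : 0 < r := lt_of_lt_of_le one_pos hr
  have hlog : 0 ≤ Real.log r := Real.log_nonneg hr
  set y := C * Real.log r with hy
  have hy0 : 0 ≤ y := mul_nonneg hC.le hlog
  have hrC : r ^ C = Real.exp y := by rw [Real.rpow_def_of_pos hr0, hy, mul_comm]
  have hexp : Real.exp y - 1 ≤ y * Real.exp y := by
    have h1 := Real.add_one_le_exp (-y)
    have h2 : Real.exp (-y) * Real.exp y = 1 := by rw [← Real.exp_add]; simp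
    nlinarith [Real.exp_pos y, mul_le_mul_of_nonneg_right h1 (Real.exp_pos y).le]
  have hyle : y ≤ C * (r - 1) :=
    mul_le_mul_of_nonneg_left (Real.log_le_sub_one_of_pos hr0) hC.le
  rw [hrC]
  nlinarith [hexp, mul_le_mul_of_nonneg_right hyle (Real.exp_pos y).le]

lemma K3lemma (h : Nice c C φ' φ'') {η ξ : ℝ} (h0 : 0 ≤ η) (hle : η ≤ ξ) :
    η * (φ' ξ - φ' η) ≤ (C * (2:ℝ) ^ C + 1) * ((ξ - η) * φ' ξ) := by
  have hC := h.hC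
  have h2C : (0:ℝ) < (2:ℝ) ^ C := Real.rpow_pos_of_pos two_pos _
  rcases eq_or_lt_of_le h0 with h0' | hη
  · obtain rfl : η = 0 := h0'.symm
    have hφ : 0 ≤ φ' ξ := h.nonneg (by linarith)
    have h1 : 0 ≤ (ξ - 0) * φ' ξ := mul_nonneg (by linarith) hφ
    nlinarith [mul_nonneg (by nlinarith : (0:ℝ) ≤ C * (2:ℝ)^C + 1) h1]
  · have hx : 0 < ξ := lt_of_lt_of_le hη hle
    have hpξ : 0 < φ' ξ := h.pos ξ hx
    have hφη : 0 ≤ φ' η := h.nonneg h0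
    have hφmono : φ' η ≤ φ' ξ := h.mono (Set.mem_Ici.mpr h0) (Set.mem_Ici.mpr hx.le) hle
    rcases le_or_gt ξ (2 * η) with hsml | hbig
    · have hb := h.pow_bound hη hle
      set r := ξ / η with hrdef
      have hr1 : 1 ≤ r := (one_le_div hη).mpr hle
      have hr2 : r ≤ 2 := (div_le_iff₀ hη).mpr (by linarith)
      have hrC : r ^ C - 1 ≤ C * r ^ C * (r - 1) := rC_lemma hC hr1
      have hr2C : r ^ C ≤ (2:ℝ) ^ C := Real.rpow_le_rpow (by linarith) hr2 hC.le
      have heq : η * (r - 1) = ξ - η := by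
        rw [hrdef]
        field_simp
      have s1 : φ' ξ - φ' η ≤ (r ^ C - 1) * φ' η := by nlinarith [hb]
      have s2 : r ^ C - 1 ≤ C * (2:ℝ) ^ C * (r - 1) := by
        nlinarith [mul_le_mul_of_nonneg_right
          (mul_le_mul_of_nonneg_left hr2C hC.le) (by linarith : (0:ℝ) ≤ r - 1)]
      have s3 : η * (φ' ξ - φ' η) ≤ C * (2:ℝ) ^ C * ((ξ - η) * φ' η) := by
        have := mul_le_mul_of_nonneg_left s1 h0
        have h4 : η * ((r ^ C - 1) * φ' η) ≤ η * ((C * (2:ℝ) ^ C * (r - 1)) * φ' η) := by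
          apply mul_le_mul_of_nonneg_left _ h0
          exact mul_le_mul_of_nonneg_right s2 hφη
        have h5 : η * ((C * (2:ℝ) ^ C * (r - 1)) * φ' η) = C * (2:ℝ) ^ C * ((η * (r-1)) * φ' η) := by ring
        rw [h5, heq] at h4
        linarith
      have s4 : (ξ - η) * φ' η ≤ (ξ - η) * φ' ξ :=
        mul_le_mul_of_nonneg_left hφmono (by linarith)
      nlinarith [mul_le_mul_of_nonneg_left s4 (by positivity : (0:ℝ) ≤ C * (2:ℝ)^C),
        mul_nonneg (by linarith : (0:ℝ) ≤ ξ - η) hpξ.le]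
    · -- 2η < ξ, so η ≤ ξ - η
      have h5 : η ≤ ξ - η := by linarith
      have s1 : η * (φ' ξ - φ' η) ≤ η * φ' ξ := by nlinarith
      have s2 : η * φ' ξ ≤ (ξ - η) * φ' ξ := mul_le_mul_of_nonneg_right h5 hpξ.le
      nlinarith [mul_nonneg (by linarith : (0:ℝ) ≤ ξ - η) hpξ.le,
        mul_nonneg (mul_pos hC h2C).le (mul_nonneg (by linarith : (0:ℝ) ≤ ξ - η) hpξ.le)]

lemma core_same (h : Nice c C φ' φ'') {ξ η : ℝ} (h0 : 0 ≤ η) (hle : η ≤ ξ) (hx : 0 < ξ) :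
    φ'' (ξ + η) * (ξ - η) ^ 2 ≤ K0i C * (psiDeriv φ' ξ - psiDeriv φ' η) ^ 2 ∧
    (psiDeriv φ' ξ - psiDeriv φ' η) ^ 2 ≤ K1c c C * (φ'' (ξ + η) * (ξ - η) ^ 2) := by
  have hc := h.hc
  have hC := h.hC
  have hpξ : 0 < φ' ξ := h.pos ξ hx
  have hφη : 0 ≤ φ' η := h.nonneg h0
  have hφmono : φ' η ≤ φ' ξ := h.mono (Set.mem_Ici.mpr h0) (Set.mem_Ici.mpr hx.le) hle
  set t := ξ + η with htdef
  have htpos : 0 < t := by rw [htdef]; linarith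
  have hxt : ξ ≤ t := by rw [htdef]; linarith
  have ht2 : t ≤ 2 * ξ := by rw [htdef]; linarith
  have hddt : 0 < φ'' t := h.ddpos htpos
  have hddξ : 0 < φ'' ξ := h.ddpos hx
  have h2C : (0:ℝ) < (2:ℝ) ^ C := Real.rpow_pos_of_pos two_pos _
  have h2C1 : (0:ℝ) < (2:ℝ) ^ (C+1) := Real.rpow_pos_of_pos two_pos _
  set F := psiDeriv φ' with hFdef
  have hF2ξ : F ξ ^ 2 = ξ * φ' ξ := Real.sq_sqrt (mul_nonneg hx.le hpξ.le)
  have hF2η : F η ^ 2 = η * φ' η := Real.sq_sqrt (mul_nonneg h0 hφη)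
  have hFξ : 0 < F ξ := Real.sqrt_pos.mpr (mul_pos hx hpξ)
  have hFη : 0 ≤ F η := Real.sqrt_nonneg _
  have hFmono : F η ≤ F ξ := Real.sqrt_le_sqrt (by nlinarith)
  have hdiff : (F ξ - F η) * (F ξ + F η) = ξ * φ' ξ - η * φ' η := by
    have e : (F ξ - F η) * (F ξ + F η) = F ξ ^ 2 - F η ^ 2 := by ring
    rw [e, hF2ξ, hF2η]
  have hK3 := K3lemma h h0 hle
  have hBu : ξ * φ' ξ - η * φ' η ≤ (2 + C * (2:ℝ) ^ C) * ((ξ - η) * φ' ξ) := by nlinarith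
  have hBl : (ξ - η) * φ' ξ ≤ ξ * φ' ξ - η * φ' η := by
    nlinarith [mul_le_mul_of_nonneg_left hφmono h0]
  have hcmp1 : c * φ'' ξ ≤ C * (2:ℝ) ^ (C+1) * φ'' t :=
    h.cmp one_le_two hx htpos (by linarith) (by linarith)
  constructor
  · -- lower bound
    have l4 : ξ * φ'' t ≤ C * (2:ℝ) ^ C * φ' ξ := by
      have a1 : t * φ'' t ≤ C * φ' t := h.up t htpos
      have a2 : φ' t ≤ (2:ℝ) ^ C * φ' ξ := h.ratio one_le_two hx htpos ht2
      have a3 : ξ * φ'' t ≤ t * φ'' t := by nlinarith [hddt]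
      nlinarith [mul_le_mul_of_nonneg_left a2 hC.le]
    have l1 : (ξ - η) * φ' ξ ≤ (F ξ - F η) * (2 * F ξ) := by
      nlinarith [hdiff, hBl, mul_le_mul_of_nonneg_left
        (by linarith : F ξ + F η ≤ 2 * F ξ) (by linarith : (0:ℝ) ≤ F ξ - F η)]
    have l2 : ((ξ - η) * φ' ξ) ^ 2 ≤ ((F ξ - F η) * (2 * F ξ)) ^ 2 :=
      pow_le_pow_left₀ (mul_nonneg (by linarith) hpξ.le) l1 2
    have l3 : (ξ - η) ^ 2 * φ' ξ ≤ 4 * ξ * (F ξ - F η) ^ 2 := by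
      apply le_of_mul_le_mul_right _ hpξ
      have e : ((F ξ - F η) * (2 * F ξ)) ^ 2 = 4 * (F ξ - F η) ^ 2 * F ξ ^ 2 := by ring
      rw [e, hF2ξ] at l2
      nlinarith [l2]
    rw [K0i]
    apply le_of_mul_le_mul_right _ hx
    have e2 : (2:ℝ) ^ (C + 2) = (2:ℝ) ^ C * 4 := by
      have : (C + 2 : ℝ) = (C + 1) + 1 := by ring
      rw [this, Real.rpow_add_one (by norm_num : (2:ℝ) ≠ 0),
        Real.rpow_add_one (by norm_num : (2:ℝ) ≠ 0)]
      ring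
    calc φ'' t * (ξ - η) ^ 2 * ξ = (ξ * φ'' t) * (ξ - η) ^ 2 := by ring
      _ ≤ (C * (2:ℝ) ^ C * φ' ξ) * (ξ - η) ^ 2 :=
          mul_le_mul_of_nonneg_right l4 (sq_nonneg _)
      _ = (C * (2:ℝ) ^ C) * ((ξ - η) ^ 2 * φ' ξ) := by ring
      _ ≤ (C * (2:ℝ) ^ C) * (4 * ξ * (F ξ - F η) ^ 2) :=
          mul_le_mul_of_nonneg_left l3 (by positivity)
      _ = C * ((2:ℝ) ^ C * 4) * (F ξ - F η) ^ 2 * ξ := by ring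
      _ = C * (2:ℝ) ^ (C + 2) * (F ξ - F η) ^ 2 * ξ := by rw [e2]
  · -- upper bound
    have u1 : (F ξ - F η) * F ξ ≤ (2 + C * (2:ℝ) ^ C) * ((ξ - η) * φ' ξ) := by
      nlinarith [mul_nonneg (sub_nonneg.mpr hFmono) hFη, hdiff, hBu]
    have u2 : ((F ξ - F η) * F ξ) ^ 2 ≤ ((2 + C * (2:ℝ) ^ C) * ((ξ - η) * φ' ξ)) ^ 2 :=
      pow_le_pow_left₀ (mul_nonneg (sub_nonneg.mpr hFmono) hFξ.le) u1 2
    have u4 : (F ξ - F η) ^ 2 * ξ ≤ (2 + C * (2:ℝ) ^ C) ^ 2 * (ξ - η) ^ 2 * φ' ξ := by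
      apply le_of_mul_le_mul_right _ hpξ
      have e : ((F ξ - F η) * F ξ) ^ 2 = (F ξ - F η) ^ 2 * F ξ ^ 2 := by ring
      rw [e, hF2ξ] at u2
      nlinarith [u2]
    have u5 : c * (c * φ' ξ) ≤ C * (2:ℝ) ^ (C+1) * φ'' t * ξ := by
      have l1' : c * φ' ξ ≤ ξ * φ'' ξ := h.low ξ hx
      calc c * (c * φ' ξ) ≤ c * (ξ * φ'' ξ) := mul_le_mul_of_nonneg_left l1' hc.le
        _ = ξ * (c * φ'' ξ) := by ring
        _ ≤ ξ * (C * (2:ℝ) ^ (C+1) * φ'' t) := mul_le_mul_of_nonneg_left hcmp1 hx.le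
        _ = C * (2:ℝ) ^ (C+1) * φ'' t * ξ := by ring
    have u6 : c * c * ((F ξ - F η) ^ 2 * ξ) ≤
        (2 + C * (2:ℝ) ^ C) ^ 2 * (ξ - η) ^ 2 * (C * (2:ℝ) ^ (C+1) * φ'' t) * ξ := by
      calc c * c * ((F ξ - F η) ^ 2 * ξ)
          ≤ c * c * ((2 + C * (2:ℝ) ^ C) ^ 2 * (ξ - η) ^ 2 * φ' ξ) := by
            nlinarith [mul_le_mul_of_nonneg_left u4 (mul_pos hc hc).le]
        _ = (2 + C * (2:ℝ) ^ C) ^ 2 * (ξ - η) ^ 2 * (c * (c * φ' ξ)) := by ring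
        _ ≤ (2 + C * (2:ℝ) ^ C) ^ 2 * (ξ - η) ^ 2 * (C * (2:ℝ) ^ (C+1) * φ'' t * ξ) := by
            apply mul_le_mul_of_nonneg_left u5 (by positivity)
        _ = _ := by ring
    have u7 : c * c * (F ξ - F η) ^ 2 ≤
        (2 + C * (2:ℝ) ^ C) ^ 2 * C * (2:ℝ) ^ (C+1) * (φ'' t * (ξ - η) ^ 2) := by
      apply le_of_mul_le_mul_right _ hx
      nlinarith [u6]
    rw [K1c, div_mul_eq_mul_div, le_div_iff₀ (by positivity : (0:ℝ) < c * c)]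
    have hQ : 0 ≤ φ'' t * (ξ - η) ^ 2 := mul_nonneg hddt.le (sq_nonneg _)
    nlinarith [u7, mul_nonneg (by positivity : (0:ℝ) ≤ 4 * c) hQ]

lemma core_opp (h : Nice c C φ' φ'') {ξ m : ℝ} (h0 : 0 ≤ m) (hle : m ≤ ξ) (hx : 0 < ξ) :
    φ'' (ξ + m) * (ξ + m) ^ 2 ≤ K0i C * (psiDeriv φ' ξ + psiDeriv φ' m) ^ 2 ∧
    (psiDeriv φ' ξ + psiDeriv φ' m) ^ 2 ≤ K1c c C * (φ'' (ξ + m) * (ξ + m) ^ 2) := by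
  have hc := h.hc
  have hC := h.hC
  have hpξ : 0 < φ' ξ := h.pos ξ hx
  have hφm : 0 ≤ φ' m := h.nonneg h0
  have hφmono : φ' m ≤ φ' ξ := h.mono (Set.mem_Ici.mpr h0) (Set.mem_Ici.mpr hx.le) hle
  set t := ξ + m with htdef
  have htpos : 0 < t := by rw [htdef]; linarith
  have hxt : ξ ≤ t := by rw [htdef]; linarith
  have ht2 : t ≤ 2 * ξ := by rw [htdef]; linarith
  have hddt : 0 < φ'' t := h.ddpos htpos
  have h2C : (0:ℝ) < (2:ℝ) ^ C := Real.rpow_pos_of_pos two_pos _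
  set F := psiDeriv φ' with hFdef
  have hF2ξ : F ξ ^ 2 = ξ * φ' ξ := Real.sq_sqrt (mul_nonneg hx.le hpξ.le)
  have hFξ : 0 < F ξ := Real.sqrt_pos.mpr (mul_pos hx hpξ)
  have hFm : 0 ≤ F m := Real.sqrt_nonneg _
  have hFmono : F m ≤ F ξ := Real.sqrt_le_sqrt (by nlinarith)
  have hφt : φ' t ≤ (2:ℝ) ^ C * φ' ξ := h.ratio one_le_two hx htpos ht2
  have hφtmono : φ' ξ ≤ φ' t := h.mono (Set.mem_Ici.mpr hx.le) (Set.mem_Ici.mpr htpos.le) hxt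
  constructor
  · -- lower: φ'' t * t^2 ≤ C 2^{C+1} ξ φ' ξ ≤ C 2^{C+2} (Fξ+Fm)^2
    have a1 : t * φ'' t ≤ C * φ' t := h.up t htpos
    have a2 : t * φ'' t ≤ C * (2:ℝ) ^ C * φ' ξ := by
      nlinarith [mul_le_mul_of_nonneg_left hφt hC.le]
    have a3 : φ'' t * t ^ 2 ≤ 2 * ξ * (C * (2:ℝ) ^ C * φ' ξ) := by
      have : φ'' t * t ^ 2 = t * (t * φ'' t) := by ring
      rw [this]
      apply mul_le_mul ht2 a2 (by nlinarith [hddt]) (by linarith)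
    have a4 : ξ * φ' ξ ≤ (F ξ + F m) ^ 2 := by nlinarith [hF2ξ]
    have e2 : (2:ℝ) ^ (C + 2) = (2:ℝ) ^ C * 4 := by
      have e : (C + 2 : ℝ) = (C + 1) + 1 := by ring
      rw [e, Real.rpow_add_one (by norm_num : (2:ℝ) ≠ 0),
        Real.rpow_add_one (by norm_num : (2:ℝ) ≠ 0)]
      ring
    rw [K0i, e2]
    nlinarith [a3, a4, mul_le_mul_of_nonneg_left a4 (by positivity : (0:ℝ) ≤ 2 * (C * (2:ℝ)^C))]
  · -- upper
    have b1 : (F ξ + F m) ^ 2 ≤ 4 * (ξ * φ' ξ) := by nlinarith [hF2ξ]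
    have b2 : c * (ξ * φ' ξ) ≤ φ'' t * t ^ 2 := by
      have l1 : c * φ' t ≤ t * φ'' t := h.low t htpos
      have l2 : ξ * φ' ξ ≤ t * φ' t :=
        mul_le_mul hxt hφtmono hpξ.le htpos.le
      have : c * (t * φ' t) ≤ t * (t * φ'' t) := by
        nlinarith [mul_le_mul_of_nonneg_left l1 htpos.le]
      nlinarith [mul_le_mul_of_nonneg_left l2 hc.le]
    rw [K1c, div_mul_eq_mul_div, le_div_iff₀ (by positivity : (0:ℝ) < c * c)]
    have hN : (0:ℝ) ≤ (2 + C * (2:ℝ) ^ C) ^ 2 * C * (2:ℝ) ^ (C+1) := by positivity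
    have hQ : 0 ≤ φ'' t * t ^ 2 := mul_nonneg hddt.le (sq_nonneg _)
    nlinarith [mul_le_mul_of_nonneg_left b1 (by positivity : (0:ℝ) ≤ c * c),
      mul_le_mul_of_nonneg_left b2 (by positivity : (0:ℝ) ≤ 4 * c),
      mul_nonneg hN hQ]


lemma Vof_zero : Vof φ' 0 = 0 := by simp [Vof]

lemma psiDeriv_zero (h : Nice c C φ' φ'') : psiDeriv φ' 0 = 0 := by
  simp [psiDeriv]

lemma Vof_nonneg_eq (h : Nice c C φ' φ'') {s : ℝ} (hs : 0 ≤ s) : Vof φ' s = psiDeriv φ' s := by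
  rcases hs.eq_or_lt with h' | h'
  · rw [← h', Vof_zero, psiDeriv_zero h]
  · rw [Vof, if_neg h'.ne', abs_of_pos h']
    field_simp

lemma Vof_neg_arg : ∀ s : ℝ, Vof φ' (-s) = -Vof φ' s := by
  intro s
  by_cases hs : s = 0
  · simp [hs, Vof]
  · rw [Vof, Vof, if_neg (neg_ne_zero.mpr hs), if_neg hs, abs_neg]
    ring

/-- The two-sided `V`-equivalence under the assumption `|η| ≤ ξ`, `0 < ξ`. -/
lemma core (h : Nice c C φ' φ'') {ξ η : ℝ} (hle : |η| ≤ ξ) (hx : 0 < ξ) :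
    φ'' (|ξ| + |η|) * (ξ - η) ^ 2 ≤ K0i C * (Vof φ' ξ - Vof φ' η) ^ 2 ∧
    (Vof φ' ξ - Vof φ' η) ^ 2 ≤ K1c c C * (φ'' (|ξ| + |η|) * (ξ - η) ^ 2) := by
  rw [abs_of_pos hx, Vof_nonneg_eq h hx.le]
  rcases le_or_gt 0 η with h0 | h0
  · rw [abs_of_nonneg h0, Vof_nonneg_eq h h0]
    exact core_same h h0 (by rwa [abs_of_nonneg h0] at hle) hx
  · rw [abs_of_neg h0]
    have hV : Vof φ' η = -psiDeriv φ' (-η) := by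
      rw [← Vof_nonneg_eq h (by linarith : (0:ℝ) ≤ -η), ← Vof_neg_arg, neg_neg]
    rw [hV]
    have h0' : (0:ℝ) ≤ -η := by linarith
    have hle' : -η ≤ ξ := by rwa [abs_of_neg h0] at hle
    have := core_opp h h0' hle' hx
    have e1 : ξ + -η = ξ - η := by ring
    have e2 : psiDeriv φ' ξ - -psiDeriv φ' (-η) = psiDeriv φ' ξ + psiDeriv φ' (-η) := by ring
    rw [e1] at this
    rw [e2]
    exact this

/-- The two-sided `V`-equivalence under the assumption `|η| ≤ |ξ|`. -/
lemma half (h : Nice c C φ' φ'') {ξ η : ℝ} (hle : |η| ≤ |ξ|) :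
    φ'' (|ξ| + |η|) * (ξ - η) ^ 2 ≤ K0i C * (Vof φ' ξ - Vof φ' η) ^ 2 ∧
    (Vof φ' ξ - Vof φ' η) ^ 2 ≤ K1c c C * (φ'' (|ξ| + |η|) * (ξ - η) ^ 2) := by
  rcases lt_trichotomy ξ 0 with hx | hx | hx
  · have h2 := core h (ξ := -ξ) (η := -η) (by rw [abs_neg]; rwa [abs_of_neg hx] at hle)
      (by linarith)
    rw [abs_neg, abs_neg, Vof_neg_arg, Vof_neg_arg] at h2
    have e1 : (-ξ - -η) ^ 2 = (ξ - η) ^ 2 := by ring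
    have e2 : (-Vof φ' ξ - -Vof φ' η) ^ 2 = (Vof φ' ξ - Vof φ' η) ^ 2 := by ring
    rw [e1, e2] at h2
    exact h2
  · subst hx
    have hη : η = 0 := by
      have := abs_nonneg η
      simp only [abs_zero] at hle
      have : |η| = 0 := le_antisymm hle (abs_nonneg η)
      exact abs_eq_zero.mp this
    subst hη
    simp [Vof_zero]
  · exact core h (by rwa [abs_of_pos hx] at hle) hx

/-- The two-sided `V`-equivalence. -/
lemma Vequiv (h : Nice c C φ' φ'') (ξ η : ℝ) :
    φ'' (|ξ| + |η|) * (ξ - η) ^ 2 ≤ K0i C * (Vof φ' ξ - Vof φ' η) ^ 2 ∧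
    (Vof φ' ξ - Vof φ' η) ^ 2 ≤ K1c c C * (φ'' (|ξ| + |η|) * (ξ - η) ^ 2) := by
  rcases le_total |η| |ξ| with hle | hle
  · exact half h hle
  · have h2 := half h (ξ := η) (η := ξ) hle
    have e1 : (η - ξ) ^ 2 = (ξ - η) ^ 2 := by ring
    have e2 : (Vof φ' η - Vof φ' ξ) ^ 2 = (Vof φ' ξ - Vof φ' η) ^ 2 := by ring
    rw [e1, e2, add_comm |η| |ξ|] at h2
    exact h2


noncomputable def bet1 (c C : ℝ) : ℝ :=
  2 * C ^ 2 * (kap c C) ^ 2 / c + C ^ 2 * (kap c C) ^ 2 * (2 * C / c) ^ (C + 2) / c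

lemma bet1_pos {c C : ℝ} (hc : 0 < c) (hC : 0 < C) : 0 < bet1 c C := by
  have hk := kap_pos hc hC
  unfold bet1
  have h1 : 0 < 2 * C ^ 2 * (kap c C) ^ 2 / c := by
    apply div_pos _ hc
    have := pow_pos hk 2
    nlinarith [pow_pos hC 2]
  have h2 : 0 ≤ C ^ 2 * (kap c C) ^ 2 * (2 * C / c) ^ (C + 2) / c := by
    have h3 : (0:ℝ) < (2 * C / c) ^ (C + 2) := Real.rpow_pos_of_pos (by positivity) _
    exact div_nonneg (mul_nonneg (mul_nonneg (sq_nonneg C) (sq_nonneg _)) h3.le) hc.le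
  linarith

lemma Ylem (h : Nice c C φ' φ'') (ξ η ν : ℝ) :
    C * (φ'' (|ξ| + |η|) * (|ξ - η| * |ξ - ν|)) ≤
      c / 2 * (φ'' (|ξ| + |η|) * (ξ - η) ^ 2) + bet1 c C * (φ'' (|ξ| + |ν|) * (ξ - ν) ^ 2) := by
  have hc := h.hc
  have hC := h.hC
  have hcC := h.hcC
  have hkap := kap_pos hc hC
  have hk0 : (0:ℝ) ≤ kap c C := hkap.le
  have hb1 := (bet1_pos hc hC).le
  set a := |ξ| + |η| with hadef
  set b := |ξ| + |ν| with hbdef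
  set v := |ξ - η| with hvdef
  set u := |ξ - ν| with hudef
  have hv0 : 0 ≤ v := abs_nonneg _
  have hu0 : 0 ≤ u := abs_nonneg _
  have hva : v ≤ a := abs_sub ξ η
  have hub : u ≤ b := abs_sub ξ ν
  have hξa : |ξ| ≤ a := by rw [hadef]; linarith [abs_nonneg η]
  have hξb : |ξ| ≤ b := by rw [hbdef]; linarith [abs_nonneg ν]
  have hev : (ξ - η) ^ 2 = v ^ 2 := (sq_abs _).symm
  have heu : (ξ - ν) ^ 2 = u ^ 2 := (sq_abs _).symm
  rw [hev, heu]
  have hEnn : 0 ≤ φ'' a * v ^ 2 := by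
    rcases hv0.eq_or_lt with h' | h'
    · rw [← h']; simp
    · exact mul_nonneg (h.ddpos (lt_of_lt_of_le h' hva)).le (sq_nonneg _)
  have hQnn : 0 ≤ φ'' b * u ^ 2 := by
    rcases hu0.eq_or_lt with h' | h'
    · rw [← h']; simp
    · exact mul_nonneg (h.ddpos (lt_of_lt_of_le h' hub)).le (sq_nonneg _)
  rcases hu0.eq_or_lt with hu | hu
  · rw [← hu]
    have e : C * (φ'' a * (v * 0)) = 0 := by ring
    rw [e]
    have h1 : (0:ℝ) ≤ φ'' b * 0 ^ 2 := by simp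
    exact add_nonneg (mul_nonneg (div_nonneg hc.le (by norm_num)) hEnn) (mul_nonneg hb1 h1)
  rcases hv0.eq_or_lt with hv | hv
  · rw [← hv]
    have e : C * (φ'' a * (0 * u)) = 0 := by ring
    rw [e]
    have h1 : (0:ℝ) ≤ φ'' a * 0 ^ 2 := by simp
    exact add_nonneg (mul_nonneg (div_nonneg hc.le (by norm_num)) h1) (mul_nonneg hb1 hQnn)
  -- main case : 0 < u, 0 < v
  have ha : 0 < a := lt_of_lt_of_le hv hva
  have hb : 0 < b := lt_of_lt_of_le hu hub
  set s := |ξ| + v with hsdef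
  set t2 := |ξ| + u with ht2def
  have hs : 0 < s := by rw [hsdef]; have := abs_nonneg ξ; linarith
  have ht2 : 0 < t2 := by rw [ht2def]; have := abs_nonneg ξ; linarith
  have hξ0 : 0 ≤ |ξ| := abs_nonneg ξ
  have hηs : |η| ≤ |ξ| + v := by
    have h1 : |η| - |ξ| ≤ |η - ξ| := abs_sub_abs_le_abs_sub η ξ
    rw [abs_sub_comm, ← hvdef] at h1
    linarith
  have hνt : |ν| ≤ |ξ| + u := by
    have h1 : |ν| - |ξ| ≤ |ν - ξ| := abs_sub_abs_le_abs_sub ν ξ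
    rw [abs_sub_comm, ← hudef] at h1
    linarith
  have X1 : φ'' a ≤ kap c C * φ'' s := by
    rw [kap]
    exact h.cmp' one_le_two ha hs (by rw [hadef, hsdef]; linarith) (by rw [hsdef]; linarith [hva, hξa])
  have X2 : φ'' t2 ≤ kap c C * φ'' b := by
    rw [kap]
    exact h.cmp' one_le_two ht2 hb (by rw [ht2def]; linarith [hub, hξb]) (by rw [hbdef, ht2def]; linarith)
  have hsp : 0 < φ'' s := h.ddpos hs
  have ht2p : 0 < φ'' t2 := h.ddpos ht2
  have hap : 0 < φ'' a := h.ddpos ha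
  have hbp : 0 < φ'' b := h.ddpos hb
  rcases le_or_gt v u with hvu | huv
  · -- Case A : v ≤ u
    have hst : s ≤ t2 := by rw [hsdef, ht2def]; linarith
    have A1 : c * (φ'' s * s) ≤ C * (φ'' t2 * t2) := by
      have a1 := h.up s hs
      have a2 : φ' s ≤ φ' t2 := h.mono (Set.mem_Ici.mpr hs.le) (Set.mem_Ici.mpr ht2.le) hst
      have a3 := h.low t2 ht2
      nlinarith [mul_le_mul_of_nonneg_left a1 hc.le,
        mul_le_mul_of_nonneg_left a2 (mul_nonneg hc.le hC.le),
        mul_le_mul_of_nonneg_left a3 hC.le]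
    have A2 : v * t2 ≤ 2 * (u * s) := by
      have h1 : v * |ξ| ≤ u * |ξ| := mul_le_mul_of_nonneg_right hvu hξ0
      rw [hsdef, ht2def]
      nlinarith [mul_nonneg hu0 hv0, mul_nonneg hu0 hξ0]
    have A2' := mul_le_mul_of_nonneg_right A2 hu0
    have HH := mul_le_mul A1 A2' (mul_nonneg (mul_nonneg hv0 ht2.le) hu0)
      (mul_nonneg hC.le (mul_nonneg ht2p.le ht2.le))
    have HH2 : (c * (φ'' s * (v * u))) * (s * t2) ≤ (2 * C * (φ'' t2 * u ^ 2)) * (s * t2) := by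
      calc (c * (φ'' s * (v * u))) * (s * t2) = (c * (φ'' s * s)) * (v * t2 * u) := by ring
        _ ≤ (C * (φ'' t2 * t2)) * (2 * (u * s) * u) := HH
        _ = (2 * C * (φ'' t2 * u ^ 2)) * (s * t2) := by ring
    have A3 : c * (φ'' s * (v * u)) ≤ 2 * C * (φ'' t2 * u ^ 2) :=
      le_of_mul_le_mul_right HH2 (mul_pos hs ht2)
    have A4 : φ'' s * (v * u) ≤ 2 * C / c * (φ'' t2 * u ^ 2) := by
      rw [div_mul_eq_mul_div, le_div_iff₀ hc]
      nlinarith [A3]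
    have hCK : (0:ℝ) ≤ C * kap c C := mul_nonneg hC.le hk0
    have hCCK : (0:ℝ) ≤ 2 * C ^ 2 * kap c C / c :=
      div_nonneg (mul_nonneg (mul_nonneg (by norm_num) (sq_nonneg C)) hk0) hc.le
    calc C * (φ'' a * (v * u)) ≤ C * (kap c C * φ'' s * (v * u)) := by
          apply mul_le_mul_of_nonneg_left _ hC.le
          exact mul_le_mul_of_nonneg_right X1 (mul_nonneg hv0 hu0)
      _ = (C * kap c C) * (φ'' s * (v * u)) := by ring
      _ ≤ (C * kap c C) * (2 * C / c * (φ'' t2 * u ^ 2)) :=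
          mul_le_mul_of_nonneg_left A4 hCK
      _ = (2 * C ^ 2 * kap c C / c) * (φ'' t2 * u ^ 2) := by ring
      _ ≤ (2 * C ^ 2 * kap c C / c) * (kap c C * (φ'' b * u ^ 2)) := by
          apply mul_le_mul_of_nonneg_left _ hCCK
          calc φ'' t2 * u ^ 2 ≤ (kap c C * φ'' b) * u ^ 2 :=
                mul_le_mul_of_nonneg_right X2 (sq_nonneg _)
            _ = kap c C * (φ'' b * u ^ 2) := by ring
      _ = (2 * C ^ 2 * (kap c C) ^ 2 / c) * (φ'' b * u ^ 2) := by ring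
      _ ≤ bet1 c C * (φ'' b * u ^ 2) := by
          apply mul_le_mul_of_nonneg_right _ hQnn
          rw [bet1]
          have h3 : (0:ℝ) < (2 * C / c) ^ (C + 2) := Real.rpow_pos_of_pos (by positivity) _
          exact le_add_of_nonneg_right (div_nonneg
            (mul_nonneg (mul_nonneg (sq_nonneg C) (sq_nonneg (kap c C))) h3.le) hc.le)
      _ ≤ c / 2 * (φ'' a * v ^ 2) + bet1 c C * (φ'' b * u ^ 2) :=
          le_add_of_nonneg_left (mul_nonneg (div_nonneg hc.le (by norm_num)) hEnn)
  · -- Case B : u < v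
    rcases le_or_gt u (c / (2 * C) * v) with hsm | hbig
    · -- u very small
      have step : v * u ≤ v * (c / (2 * C) * v) := mul_le_mul_of_nonneg_left hsm hv0
      have e : C * (φ'' a * (v * (c / (2 * C) * v))) = c / 2 * (φ'' a * v ^ 2) := by
        field_simp
      calc C * (φ'' a * (v * u)) ≤ C * (φ'' a * (v * (c / (2 * C) * v))) := by
            apply mul_le_mul_of_nonneg_left _ hC.le
            exact mul_le_mul_of_nonneg_left step hap.le
        _ = c / 2 * (φ'' a * v ^ 2) := e
        _ ≤ c / 2 * (φ'' a * v ^ 2) + bet1 c C * (φ'' b * u ^ 2) :=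
            le_add_of_nonneg_right (mul_nonneg hb1 hQnn)
    · -- c/(2C) v < u < v
      set M := 2 * C / c with hMdef
      have hM1 : (1:ℝ) ≤ M := by rw [hMdef, le_div_iff₀ hc]; linarith
      have hMpos : (0:ℝ) < M := by linarith
      have hcv : c * v < 2 * C * u := by
        have h1 := hbig
        rw [div_mul_eq_mul_div, div_lt_iff₀ (by linarith : (0:ℝ) < 2 * C)] at h1
        linarith
      have hvMu : v ≤ M * u := by
        rw [hMdef, div_mul_eq_mul_div, le_div_iff₀ hc]
        nlinarith
      have hst : t2 ≤ s := by rw [hsdef, ht2def]; linarith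
      have hsM : s ≤ M * t2 := by
        rw [hsdef, ht2def]
        nlinarith [mul_le_mul_of_nonneg_right hM1 hξ0]
      have X3 : φ'' s ≤ C / c * M ^ (C + 1) * φ'' t2 :=
        h.cmp' hM1 hs ht2 hsM (by nlinarith [mul_le_mul_of_nonneg_right hM1 hs.le])
      have hMC : (0:ℝ) < M ^ (C + 1) := Real.rpow_pos_of_pos hMpos _
      have hMC2 : (0:ℝ) < M ^ (C + 2) := Real.rpow_pos_of_pos hMpos _
      have hMe : M ^ (C + 2) = M ^ (C + 1) * M := by
        have e : (C + 2 : ℝ) = (C + 1) + 1 := by ring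
        rw [e, Real.rpow_add_one hMpos.ne']
      have hCKM : (0:ℝ) ≤ C * kap c C * M := mul_nonneg (mul_nonneg hC.le hk0) hMpos.le
      have hbig2 : (0:ℝ) ≤ C ^ 2 * kap c C * M ^ (C + 2) / c :=
        div_nonneg (mul_nonneg (mul_nonneg (sq_nonneg C) hk0) hMC2.le) hc.le
      calc C * (φ'' a * (v * u)) ≤ C * (kap c C * φ'' s * (v * u)) := by
            apply mul_le_mul_of_nonneg_left _ hC.le
            exact mul_le_mul_of_nonneg_right X1 (mul_nonneg hv0 hu0)
        _ = (C * kap c C) * (φ'' s * (v * u)) := by ring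
        _ ≤ (C * kap c C) * (φ'' s * (M * u * u)) := by
            apply mul_le_mul_of_nonneg_left _ (mul_nonneg hC.le hk0)
            apply mul_le_mul_of_nonneg_left _ hsp.le
            exact mul_le_mul_of_nonneg_right hvMu hu0
        _ = (C * kap c C * M) * (φ'' s * u ^ 2) := by ring
        _ ≤ (C * kap c C * M) * ((C / c * M ^ (C + 1) * φ'' t2) * u ^ 2) := by
            apply mul_le_mul_of_nonneg_left _ hCKM
            exact mul_le_mul_of_nonneg_right X3 (sq_nonneg _)
        _ = (C ^ 2 * kap c C * (M ^ (C + 1) * M) / c) * (φ'' t2 * u ^ 2) := by ring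
        _ = (C ^ 2 * kap c C * M ^ (C + 2) / c) * (φ'' t2 * u ^ 2) := by rw [hMe]
        _ ≤ (C ^ 2 * kap c C * M ^ (C + 2) / c) * (kap c C * (φ'' b * u ^ 2)) := by
            apply mul_le_mul_of_nonneg_left _ hbig2
            calc φ'' t2 * u ^ 2 ≤ (kap c C * φ'' b) * u ^ 2 :=
                  mul_le_mul_of_nonneg_right X2 (sq_nonneg _)
              _ = kap c C * (φ'' b * u ^ 2) := by ring
        _ = (C ^ 2 * (kap c C) ^ 2 * M ^ (C + 2) / c) * (φ'' b * u ^ 2) := by ring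
        _ ≤ bet1 c C * (φ'' b * u ^ 2) := by
            apply mul_le_mul_of_nonneg_right _ hQnn
            rw [bet1, hMdef]
            have h2 : (0:ℝ) ≤ 2 * C ^ 2 * (kap c C) ^ 2 / c :=
              div_nonneg (mul_nonneg (mul_nonneg (by norm_num) (sq_nonneg C)) (sq_nonneg _)) hc.le
            exact le_add_of_nonneg_left h2
        _ ≤ c / 2 * (φ'' a * v ^ 2) + bet1 c C * (φ'' b * u ^ 2) :=
            le_add_of_nonneg_left (mul_nonneg (div_nonneg hc.le (by norm_num)) hEnn)


noncomputable def alp (c C : ℝ) : ℝ := c / (2 * K1c c C)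
noncomputable def betC (c C : ℝ) : ℝ := bet1 c C * K0i C

lemma alp_pos {c C : ℝ} (hc : 0 < c) (hC : 0 < C) : 0 < alp c C := by
  have := K1c_pos hc hC
  rw [alp]
  positivity

lemma betC_pos {c C : ℝ} (hc : 0 < c) (hC : 0 < C) : 0 < betC c C :=
  mul_pos (bet1_pos hc hC) (K0i_pos hC)

lemma main_pt (h : Nice c C φ' φ'') {A : ℝ → ℝ} (hA : OrthotropicGrowth φ'' A c C)
    (ξ η ν : ℝ) :
    alp c C * (Vof φ' ξ - Vof φ' η) ^ 2 ≤
      (A ξ - A η) * (ν - η) + betC c C * (Vof φ' ξ - Vof φ' ν) ^ 2 := by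
  have hc := h.hc
  have hC := h.hC
  have hK1 := K1c_pos hc hC
  have hK0 := K0i_pos hC
  have hb1 := bet1_pos hc hC
  have halp := alp_pos hc hC
  have h1 : c * (φ'' (|ξ| + |η|) * (ξ - η) ^ 2) ≤ (A ξ - A η) * (ξ - η) := by
    have h0 := (hA ξ η).1
    rwa [sq_abs] at h0
  have h2 : (A ξ - A η) * (ξ - ν) ≤ C * (φ'' (|ξ| + |η|) * (|ξ - η| * |ξ - ν|)) := by
    calc (A ξ - A η) * (ξ - ν) ≤ |(A ξ - A η) * (ξ - ν)| := le_abs_self _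
      _ = |A ξ - A η| * |ξ - ν| := abs_mul _ _
      _ ≤ (C * (φ'' (|ξ| + |η|) * |ξ - η|)) * |ξ - ν| :=
          mul_le_mul_of_nonneg_right (hA ξ η).2 (abs_nonneg _)
      _ = C * (φ'' (|ξ| + |η|) * (|ξ - η| * |ξ - ν|)) := by ring
  have hY := Ylem h ξ η ν
  have h4 := (Vequiv h ξ η).2
  have h5 := (Vequiv h ξ ν).1
  have h4' : alp c C * (Vof φ' ξ - Vof φ' η) ^ 2 ≤
      c / 2 * (φ'' (|ξ| + |η|) * (ξ - η) ^ 2) := by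
    have e : alp c C * (K1c c C * (φ'' (|ξ| + |η|) * (ξ - η) ^ 2)) =
        c / 2 * (φ'' (|ξ| + |η|) * (ξ - η) ^ 2) := by
      rw [alp]
      field_simp
    calc alp c C * (Vof φ' ξ - Vof φ' η) ^ 2
        ≤ alp c C * (K1c c C * (φ'' (|ξ| + |η|) * (ξ - η) ^ 2)) :=
          mul_le_mul_of_nonneg_left h4 halp.le
      _ = c / 2 * (φ'' (|ξ| + |η|) * (ξ - η) ^ 2) := e
  have h5' : bet1 c C * (φ'' (|ξ| + |ν|) * (ξ - ν) ^ 2) ≤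
      betC c C * (Vof φ' ξ - Vof φ' ν) ^ 2 := by
    rw [betC]
    calc bet1 c C * (φ'' (|ξ| + |ν|) * (ξ - ν) ^ 2)
        ≤ bet1 c C * (K0i C * (Vof φ' ξ - Vof φ' ν) ^ 2) :=
          mul_le_mul_of_nonneg_left h5 hb1.le
      _ = bet1 c C * K0i C * (Vof φ' ξ - Vof φ' ν) ^ 2 := by ring
  have e0 : (A ξ - A η) * (ν - η) = (A ξ - A η) * (ξ - η) - (A ξ - A η) * (ξ - ν) := by ring
  linarith [h1, h2, hY, h4', h5']

end Statement9Aux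

/-- abstract best-approximation / Céa-type lemma: under the
orthotropic growth assumptions and Galerkin orthogonality,
`∫_Ω |V(G) − V(G_h)|² ≤ C'' ∫_Ω |V(G) − V(G_v)|²`, with `C''` depending only on
`c, C, D`. -/
theorem statement9 (c C D : ℝ) (hc : 0 < c) (hcC : c ≤ C) (hD : 0 < D) :
    ∃ C'' : ℝ, 0 < C'' ∧
      ∀ (d : ℕ) (φ φ' φ'' A : Fin d → ℝ → ℝ),
        (∀ i, IsNFunction (φ i) (φ' i)) →
        (∀ i, ContDiffOn ℝ 2 (φ i) (Set.Ioi 0)) →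
        (∀ i, ∀ t : ℝ, 0 < t → HasDerivAt (φ i) (φ' i t) t) →
        (∀ i, ∀ t : ℝ, 0 < t → HasDerivAt (φ' i) (φ'' i t) t) →
        (∀ i, Delta2 (φ i) D) →
        (∀ i, Delta2 (complementary (φ' i)) D) →
        (∀ i, UniformlyConvex (φ' i) (φ'' i) c C) →
        (∀ i, Continuous (A i)) → (∀ i, A i 0 = 0) →
        (∀ i, OrthotropicGrowth (φ'' i) (A i) c C) →
        ∀ (Ω : Set (Fin d → ℝ)) (G Gh Gv : (Fin d → ℝ) → (Fin d → ℝ)),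
          MeasurableSet Ω → volume Ω < ⊤ →
          Measurable G → Measurable Gh → Measurable Gv →
          IntegrableOn (fun x => ∑ i, (Vof (φ' i) (G x i) - Vof (φ' i) (Gh x i)) ^ 2) Ω →
          IntegrableOn (fun x => ∑ i, (Vof (φ' i) (G x i) - Vof (φ' i) (Gv x i)) ^ 2) Ω →
          IntegrableOn (fun x => ∑ i, (A i (G x i) - A i (Gh x i)) * (Gh x i - Gv x i)) Ω →
          (∫ x in Ω, ∑ i, (A i (G x i) - A i (Gh x i)) * (Gh x i - Gv x i)) = 0 →
          (∫ x in Ω, ∑ i, (Vof (φ' i) (G x i) - Vof (φ' i) (Gh x i)) ^ 2) ≤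
            C'' * ∫ x in Ω, ∑ i, (Vof (φ' i) (G x i) - Vof (φ' i) (Gv x i)) ^ 2 := by
  classical
  have hC : 0 < C := lt_of_lt_of_le hc hcC
  refine ⟨Statement9Aux.betC c C / Statement9Aux.alp c C,
    div_pos (Statement9Aux.betC_pos hc hC) (Statement9Aux.alp_pos hc hC), ?_⟩
  intro d φ φ' φ'' A hNF _hCD _hd1 hd2 _hΔ _hΔs hUC _hAc _hA0 hOG Ω G Gh Gv _hm _hvol _hmG _hmGh
    _hmGv hIW hIZ hIO hOrth
  have hn : ∀ i, Statement9Aux.Nice c C (φ' i) (φ'' i) := fun i =>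
    { hc := hc, hcC := hcC, mono := (hNF i).deriv_mono, zero := (hNF i).deriv_zero,
      pos := (hNF i).deriv_pos, deriv := hd2 i,
      low := fun t ht => (hUC i t ht).1, up := fun t ht => (hUC i t ht).2 }
  set α := Statement9Aux.alp c C with hα
  set β := Statement9Aux.betC c C with hβ
  have hαp : 0 < α := Statement9Aux.alp_pos hc hC
  have key : ∀ x : Fin d → ℝ,
      α * (∑ i, (Vof (φ' i) (G x i) - Vof (φ' i) (Gh x i)) ^ 2) ≤
        -(∑ i, (A i (G x i) - A i (Gh x i)) * (Gh x i - Gv x i)) +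
          β * (∑ i, (Vof (φ' i) (G x i) - Vof (φ' i) (Gv x i)) ^ 2) := by
    intro x
    calc α * (∑ i, (Vof (φ' i) (G x i) - Vof (φ' i) (Gh x i)) ^ 2)
        = ∑ i, α * (Vof (φ' i) (G x i) - Vof (φ' i) (Gh x i)) ^ 2 := by
          rw [Finset.mul_sum]
      _ ≤ ∑ i, ((A i (G x i) - A i (Gh x i)) * (Gv x i - Gh x i) +
            β * (Vof (φ' i) (G x i) - Vof (φ' i) (Gv x i)) ^ 2) :=
          Finset.sum_le_sum fun i _ =>
            Statement9Aux.main_pt (hn i) (hOG i) (G x i) (Gh x i) (Gv x i)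
      _ = (∑ i, (A i (G x i) - A i (Gh x i)) * (Gv x i - Gh x i)) +
            ∑ i, β * (Vof (φ' i) (G x i) - Vof (φ' i) (Gv x i)) ^ 2 :=
          Finset.sum_add_distrib
      _ = -(∑ i, (A i (G x i) - A i (Gh x i)) * (Gh x i - Gv x i)) +
            β * (∑ i, (Vof (φ' i) (G x i) - Vof (φ' i) (Gv x i)) ^ 2) := by
          rw [← Finset.sum_neg_distrib, ← Finset.mul_sum]
          congr 1
          exact Finset.sum_congr rfl fun i _ => by ring
  have hI1 : Integrable (fun x => α * (∑ i, (Vof (φ' i) (G x i) - Vof (φ' i) (Gh x i)) ^ 2))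
      (volume.restrict Ω) := hIW.const_mul _
  have hIOn : Integrable (fun x => -(∑ i, (A i (G x i) - A i (Gh x i)) * (Gh x i - Gv x i)))
      (volume.restrict Ω) := hIO.neg
  have hIZb : Integrable (fun x => β * (∑ i, (Vof (φ' i) (G x i) - Vof (φ' i) (Gv x i)) ^ 2))
      (volume.restrict Ω) := hIZ.const_mul _
  have hle := integral_mono hI1 (hIOn.add hIZb) key
  simp only [Pi.add_apply] at hle
  rw [integral_const_mul] at hle
  rw [integral_add hIOn hIZb, integral_neg, hOrth, integral_const_mul] at hle
  rw [div_mul_eq_mul_div, le_div_iff₀ hαp]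
  linarith [hle]
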